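/- Let N ≥ 1 and let (Γ₁, Γ₂) be a pair of N×N complex matrices representing a true 2×N×N entangled state with n = r_max(Γ₁,Γ₂) < N. Then 3n ≥ 2N (i.e. n ≥ 2N/3). -/

import Mathlib

open Matrix

/-- Maximum rank of the pencil `α • Γ₁ + β • Γ₂` over `(α, β) ≠ (0, 0)`. -/
noncomputable def rmax {N : ℕ} (Γ₁ Γ₂ : Matrix (Fin N) (Fin N) ℂ) : ℕ :=
  sSup {r : ℕ | ∃ α β : ℂ, ¬(α = 0 ∧ β = 0) ∧ (α • Γ₁ + β • Γ₂).rank = r}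

/-- Minimum rank of the pencil `α • Γ₁ + β • Γ₂` over `(α, β) ≠ (0, 0)`. -/
noncomputable def rmin {N : ℕ} (Γ₁ Γ₂ : Matrix (Fin N) (Fin N) ℂ) : ℕ :=
  sInf {r : ℕ | ∃ α β : ℂ, ¬(α = 0 ∧ β = 0) ∧ (α • Γ₁ + β • Γ₂).rank = r}

/-- A pair `(Γ₁, Γ₂)` of `N × N` complex matrices represents a true `2 × N × N`
entangled state. -/
def TrueEntangled {N : ℕ} (Γ₁ Γ₂ : Matrix (Fin N) (Fin N) ℂ) : Prop :=
  LinearIndependent ℂ ![Γ₁, Γ₂] ∧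
  (Matrix.fromRows Γ₁ Γ₂).rank = N ∧
  (Matrix.fromCols Γ₁ Γ₂).rank = N


section PencilAux
open Polynomial Module Submodule

lemma pencil_colspan_mem {N m : ℕ} (M : Matrix (Fin N) (Fin m) ℂ) (S : Submodule ℂ (Fin N → ℂ))
    (h : ∀ j, (fun i => M i j) ∈ S) (v : Fin m → ℂ) : M *ᵥ v ∈ S := by
  have hM : M *ᵥ v = ∑ j, v j • (fun i => M i j) := by
    funext i; simp [Matrix.mulVec, dotProduct, Finset.sum_apply, mul_comm]
  rw [hM]; exact Submodule.sum_mem _ fun j _ => Submodule.smul_mem _ _ (h j)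

lemma pencil_lemA {N : ℕ} (A B : Matrix (Fin N) (Fin N) ℂ)
    (hle : ∀ l : ℂ, (A + l • B).rank ≤ A.rank)
    (w : Fin N → ℂ)
    (hw : ∀ l : ℂ, l ≠ 0 → w ∈ LinearMap.range (A + l • B).mulVecLin) :
    w ∈ LinearMap.range A.mulVecLin := by
  by_contra hcon
  set R := LinearMap.range A.mulVecLin with hRdef
  set m := finrank ℂ R with hm
  have hmrank : A.rank = m := rfl
  let e : Basis (Fin m) ℂ R := Module.finBasis ℂ R
  have hch : ∀ j : Fin m, ∃ v, A *ᵥ v = (e j : Fin N → ℂ) := by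
    intro j
    obtain ⟨v, hv⟩ := LinearMap.mem_range.mp (e j).2
    exact ⟨v, by rw [← Matrix.mulVecLin_apply]; exact hv⟩
  choose u hu using hch
  set c : Fin (m + 1) → (Fin N → ℂ) := Fin.cons w (fun j => (e j : Fin N → ℂ)) with hc
  have hei : LinearIndependent ℂ (fun j => (e j : Fin N → ℂ)) :=
    e.linearIndependent.map' R.subtype R.ker_subtype
  have hspan : Submodule.span ℂ (Set.range fun j => ((e j : Fin N → ℂ))) = R := by
    have h1 : (Set.range fun j => ((e j : Fin N → ℂ))) = R.subtype '' Set.range e := by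
      rw [← Set.range_comp]; rfl
    rw [h1, ← Submodule.map_span, e.span_eq, Submodule.map_top, Submodule.range_subtype]
  have hcind : LinearIndependent ℂ c :=
    linearIndependent_fin_cons.2 ⟨hei, by rw [hspan]; exact hcon⟩
  set M0 : Matrix (Fin N) (Fin (m + 1)) ℂ := Matrix.of fun i j => c j i with hM0
  set c1 : Fin (m + 1) → (Fin N → ℂ) := Fin.cons 0 (fun j => B *ᵥ u j) with hc1
  set M1 : Matrix (Fin N) (Fin (m + 1)) ℂ := Matrix.of fun i j => c1 j i with hM1
  have hM0inj : Function.Injective M0.mulVec := by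
    refine Matrix.mulVec_injective_iff.mpr ?_
    exact hcind
  have hker0 : LinearMap.ker M0.mulVecLin = ⊥ :=
    LinearMap.ker_eq_bot.2 hM0inj
  obtain ⟨g, hg⟩ := LinearMap.exists_leftInverse_of_injective M0.mulVecLin hker0
  set P : Matrix (Fin (m + 1)) (Fin N) ℂ := LinearMap.toMatrix' g with hP
  have hPM0 : P * M0 = 1 := by
    have h1 : LinearMap.toMatrix' M0.mulVecLin = M0 := by
      rw [← Matrix.toLin'_apply', LinearMap.toMatrix'_toLin']
    rw [hP, ← h1, ← LinearMap.toMatrix'_comp, hg, LinearMap.toMatrix'_id]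
  set q : Polynomial ℂ :=
    (((P * M0).map C) + (X : Polynomial ℂ) • ((P * M1).map C)).det with hq
  have heval : ∀ l : ℂ, q.eval l = (P * M0 + l • (P * M1)).det := by
    intro l
    have hmap : (evalRingHom l).mapMatrix (((P * M0).map C) + (X : Polynomial ℂ) • ((P * M1).map C))
        = P * M0 + l • (P * M1) := by
      ext i j
      simp only [RingHom.mapMatrix_apply, Matrix.map_apply, Matrix.add_apply, Matrix.smul_apply,
        smul_eq_mul, Polynomial.eval_add, Polynomial.eval_mul, Polynomial.eval_X,
        Polynomial.eval_C, Polynomial.coe_evalRingHom]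
    calc q.eval l = (evalRingHom l) q := rfl
      _ = ((evalRingHom l).mapMatrix (((P * M0).map C) + (X : Polynomial ℂ) • ((P * M1).map C))).det := by
          rw [hq, RingHom.map_det]
      _ = (P * M0 + l • (P * M1)).det := by rw [hmap]
  have hq0 : q.eval 0 = 1 := by
    rw [heval 0, zero_smul, add_zero, hPM0, Matrix.det_one]
  have hqne : q ≠ 0 := fun h => by simp [h] at hq0
  obtain ⟨l, hl⟩ := ((Polynomial.finite_setOf_isRoot hqne).insert 0).infinite_compl.nonempty
  simp only [Set.mem_compl_iff, Set.mem_insert_iff, Set.mem_setOf_eq, not_or] at hl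
  obtain ⟨hl0, hlroot⟩ := hl
  have hdet : (P * (M0 + l • M1)).det ≠ 0 := by
    rw [Matrix.mul_add, Matrix.mul_smul]
    rw [Polynomial.IsRoot] at hlroot
    rw [← heval l]; exact hlroot
  have hinjP : Function.Injective (P * (M0 + l • M1)).mulVec := by
    intro x y hxy
    have h2 : (P * (M0 + l • M1))⁻¹ *ᵥ (P * (M0 + l • M1)) *ᵥ x
        = (P * (M0 + l • M1))⁻¹ *ᵥ (P * (M0 + l • M1)) *ᵥ y := by rw [hxy]
    rwa [Matrix.mulVec_mulVec, Matrix.mulVec_mulVec, Matrix.nonsing_inv_mul _ (Ne.isUnit hdet),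
      Matrix.one_mulVec, Matrix.one_mulVec] at h2
  have hinj2 : Function.Injective (M0 + l • M1).mulVec := by
    intro x y hxy
    apply hinjP
    rw [← Matrix.mulVec_mulVec, ← Matrix.mulVec_mulVec, hxy]
  have hrange : LinearMap.range (M0 + l • M1).mulVecLin ≤ LinearMap.range (A + l • B).mulVecLin := by
    rintro x ⟨v, rfl⟩
    show (M0 + l • M1) *ᵥ v ∈ _
    apply pencil_colspan_mem
    intro j
    induction j using Fin.cases with
    | zero =>
        have hcol : (fun i => (M0 + l • M1) i 0) = w := by
          funext i
          simp [hM0, hM1, hc, hc1, Matrix.add_apply, Matrix.smul_apply]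
        rw [hcol]; exact hw l hl0
    | succ j =>
        have hcol : (fun i => (M0 + l • M1) i j.succ) = (A + l • B) *ᵥ u j := by
          funext i
          have hv : (A + l • B) *ᵥ u j = A *ᵥ u j + l • (B *ᵥ u j) := by
            rw [Matrix.add_mulVec, Matrix.smul_mulVec]
          rw [hv, hu j]
          simp [hM0, hM1, hc, hc1, Matrix.add_apply, Matrix.smul_apply, smul_eq_mul]
        rw [hcol]
        exact ⟨u j, rfl⟩
  have hfr : finrank ℂ (LinearMap.range (M0 + l • M1).mulVecLin) = m + 1 := by
    have h3 := LinearMap.finrank_range_add_finrank_ker (M0 + l • M1).mulVecLin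
    rw [LinearMap.ker_eq_bot.2 hinj2, finrank_bot] at h3
    simpa using h3
  have hle2 := Submodule.finrank_mono hrange
  rw [hfr] at hle2
  have hle3 := hle l
  have : (A + l • B).rank = finrank ℂ (LinearMap.range (A + l • B).mulVecLin) := rfl
  omega

lemma pencil_lem1 {N : ℕ} (A B : Matrix (Fin N) (Fin N) ℂ)
    (hle : ∀ l : ℂ, (A + l • B).rank ≤ A.rank)
    (x : Fin N → ℂ) (hx : A *ᵥ x = 0) :
    B *ᵥ x ∈ LinearMap.range A.mulVecLin := by
  apply pencil_lemA A B hle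
  intro l hl
  refine ⟨l⁻¹ • x, ?_⟩
  rw [Matrix.mulVecLin_apply, Matrix.add_mulVec, Matrix.smul_mulVec,
    Matrix.mulVec_smul, Matrix.mulVec_smul, hx, smul_zero, zero_add, smul_smul,
    mul_inv_cancel₀ hl, one_smul]

lemma pencil_lem2 {N : ℕ} (A B : Matrix (Fin N) (Fin N) ℂ)
    (hle : ∀ l : ℂ, (A + l • B).rank ≤ A.rank)
    (x y : Fin N → ℂ) (hx : A *ᵥ x = 0) (hxy : A *ᵥ y = B *ᵥ x) :
    B *ᵥ y ∈ LinearMap.range A.mulVecLin := by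
  apply pencil_lemA A B hle
  intro l hl
  refine ⟨l⁻¹ • y - (l⁻¹ * l⁻¹) • x, ?_⟩
  rw [Matrix.mulVecLin_apply, Matrix.add_mulVec, Matrix.smul_mulVec]
  rw [Matrix.mulVec_sub, Matrix.mulVec_sub, Matrix.mulVec_smul, Matrix.mulVec_smul,
    Matrix.mulVec_smul, Matrix.mulVec_smul, hx, smul_zero, sub_zero, hxy]
  rw [smul_sub, smul_smul, smul_smul, mul_inv_cancel₀ hl, one_smul, ← mul_assoc,
    mul_inv_cancel₀ hl, one_mul]
  abel

set_option synthInstance.maxHeartbeats 400000 in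
set_option maxHeartbeats 1000000 in
lemma pencil_core {N : ℕ} (A B : Matrix (Fin N) (Fin N) ℂ)
    (hle : ∀ l : ℂ, (A + l • B).rank ≤ A.rank)
    (hker : ∀ x, A *ᵥ x = 0 → B *ᵥ x = 0 → x = 0)
    (hkerT : ∀ x, Aᵀ *ᵥ x = 0 → Bᵀ *ᵥ x = 0 → x = 0) :
    2 * N ≤ 3 * A.rank := by
  classical
  have hleT : ∀ l : ℂ, (Aᵀ + l • Bᵀ).rank ≤ Aᵀ.rank := by
    intro l
    have h1 : Aᵀ + l • Bᵀ = (A + l • B)ᵀ := by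
      rw [Matrix.transpose_add, Matrix.transpose_smul]
    rw [h1, Matrix.rank_transpose, Matrix.rank_transpose]
    exact hle l
  set F := A.mulVecLin with hF
  set G := B.mulVecLin with hG
  set K := LinearMap.ker F with hK
  set k := finrank ℂ K with hk
  set n := A.rank with hn
  have hnk : n + k = N := by
    have := LinearMap.finrank_range_add_finrank_ker F
    simp at this; exact this
  set S : Submodule ℂ (Fin N → ℂ) := K.map G with hS
  have hSR : S ≤ LinearMap.range F := by
    rintro _ ⟨x, hxK, rfl⟩
    exact pencil_lem1 A B hle x hxK
  have hSk : finrank ℂ S = k := by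
    have h1 : LinearMap.range (G.domRestrict K) = S := LinearMap.range_domRestrict K G
    have h2 : LinearMap.ker (G.domRestrict K) = ⊥ := by
      rw [Submodule.eq_bot_iff]
      rintro ⟨x, hxK⟩ hx
      have hGx : B *ᵥ x = 0 := hx
      have : x = 0 := hker x hxK hGx
      exact Subtype.ext this
    have h3 := LinearMap.finrank_range_add_finrank_ker (G.domRestrict K)
    rw [h1, h2, finrank_bot, add_zero] at h3
    exact h3
  set W : Submodule ℂ (Fin N → ℂ) := S.comap F with hW
  have hKW : K ≤ W := by
    intro x hx
    show F x ∈ S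
    rw [LinearMap.mem_ker.mp hx]
    exact S.zero_mem
  have hWk : finrank ℂ W = k + k := by
    have h1 : LinearMap.range (F.domRestrict W) = S := by
      rw [LinearMap.range_domRestrict, hW, Submodule.map_comap_eq]
      exact inf_eq_right.mpr hSR
    have h2 : LinearMap.ker (F.domRestrict W) = K.comap W.subtype :=
      LinearMap.ker_domRestrict W F
    have h3 := LinearMap.finrank_range_add_finrank_ker (F.domRestrict W)
    rw [h1, h2] at h3
    have h4 : finrank ℂ (K.comap W.subtype) = k :=
      (Submodule.comapSubtypeEquivOfLe hKW).finrank_eq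
    rw [h4, hSk] at h3
    exact h3.symm
  -- transpose side
  set K' := LinearMap.ker Aᵀ.mulVecLin with hK'
  have hk' : finrank ℂ K' = k := by
    have h1 := LinearMap.finrank_range_add_finrank_ker Aᵀ.mulVecLin
    have h2 : finrank ℂ (LinearMap.range Aᵀ.mulVecLin) = n := by
      show Aᵀ.rank = n
      rw [Matrix.rank_transpose, hn]
    have h3 : finrank ℂ (Fin N → ℂ) = N := by simp
    rw [h2, h3, ← hK'] at h1
    omega
  set S' : Submodule ℂ (Fin N → ℂ) := K'.map Bᵀ.mulVecLin with hS'
  have hS'k : finrank ℂ S' = k := by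
    have h1 : LinearMap.range (Bᵀ.mulVecLin.domRestrict K') = S' :=
      LinearMap.range_domRestrict K' Bᵀ.mulVecLin
    have h2 : LinearMap.ker (Bᵀ.mulVecLin.domRestrict K') = ⊥ := by
      rw [Submodule.eq_bot_iff]
      rintro ⟨x, hxK⟩ hx
      exact Subtype.ext (hkerT x hxK hx)
    have h3 := LinearMap.finrank_range_add_finrank_ker (Bᵀ.mulVecLin.domRestrict K')
    rw [h1, h2, finrank_bot, add_zero] at h3
    rw [h3]
    exact hk'
  -- the pairing map
  set Φ : (Fin N → ℂ) →ₗ[ℂ] Module.Dual ℂ (Fin N → ℂ) :=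
    LinearMap.mk₂ ℂ (fun x y => dotProduct x y)
      (fun a b c => add_dotProduct a b c)
      (fun a b c => smul_dotProduct a b c)
      (fun a b c => dotProduct_add a b c)
      (fun a b c => dotProduct_smul a b c) with hΦ
  have hΦinj : Function.Injective Φ := by
    intro x y hxy
    funext i
    have := congrArg (fun f => f (Pi.single i 1)) hxy
    simpa [hΦ, dotProduct_single] using this
  have hmap : S'.map Φ ≤ W.dualAnnihilator := by
    rintro _ ⟨s, hs, rfl⟩
    rw [Submodule.mem_dualAnnihilator]
    intro y hyW
    obtain ⟨φ, hφK', rfl⟩ := hs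
    have hyS : A *ᵥ y ∈ S := hyW
    obtain ⟨x, hxK, hxy⟩ := hyS
    have hBy : B *ᵥ y ∈ LinearMap.range F :=
      pencil_lem2 A B hle x y hxK (by rw [← hxy]; rfl)
    obtain ⟨z, hz⟩ := hBy
    show dotProduct (Bᵀ.mulVecLin φ) y = 0
    rw [Matrix.mulVecLin_apply, Matrix.mulVec_transpose]
    rw [← Matrix.dotProduct_mulVec]
    have hz' : B *ᵥ y = A *ᵥ z := by rw [← hz]; rfl
    rw [hz', Matrix.dotProduct_mulVec]
    have hφ : φ ᵥ* A = 0 := by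
      have := LinearMap.mem_ker.mp hφK'
      rw [Matrix.mulVecLin_apply, Matrix.mulVec_transpose] at this
      exact this
    rw [hφ, zero_dotProduct]
  have hfinmap : finrank ℂ (S'.map Φ) = k := by
    rw [(Submodule.equivMapOfInjective Φ hΦinj S').finrank_eq.symm, hS'k]
  have hfin1 : finrank ℂ (S'.map Φ) ≤ finrank ℂ W.dualAnnihilator :=
    Submodule.finrank_mono hmap
  have hfin2 : finrank ℂ W.dualAnnihilator = finrank ℂ ((Fin N → ℂ) ⧸ W) :=
    (Subspace.quotEquivAnnihilator W).finrank_eq.symm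
  have hfin3 : finrank ℂ ((Fin N → ℂ) ⧸ W) + finrank ℂ W = N := by
    rw [Submodule.finrank_quotient_add_finrank]; simp
  rw [hfinmap, hfin2] at hfin1
  rw [hWk] at hfin3
  omega
lemma pencil_rows_inj {N : ℕ} (Γ₁ Γ₂ : Matrix (Fin N) (Fin N) ℂ)
    (h : (Matrix.fromRows Γ₁ Γ₂).rank = N) (x : Fin N → ℂ)
    (h1 : Γ₁ *ᵥ x = 0) (h2 : Γ₂ *ᵥ x = 0) : x = 0 := by
  have h3 := LinearMap.finrank_range_add_finrank_ker (Matrix.fromRows Γ₁ Γ₂).mulVecLin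
  have h4 : finrank ℂ (Fin N → ℂ) = N := by simp
  rw [h4] at h3
  have h5 : finrank ℂ (LinearMap.range (Matrix.fromRows Γ₁ Γ₂).mulVecLin) = N := h
  have h6 : finrank ℂ (LinearMap.ker (Matrix.fromRows Γ₁ Γ₂).mulVecLin) = 0 := by omega
  have h7 : LinearMap.ker (Matrix.fromRows Γ₁ Γ₂).mulVecLin = ⊥ :=
    Submodule.finrank_eq_zero.mp h6
  have h8 : (Matrix.fromRows Γ₁ Γ₂).mulVecLin x = 0 := by
    rw [Matrix.mulVecLin_apply, Matrix.fromRows_mulVec, h1, h2]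
    funext i
    cases i <;> rfl
  have := Submodule.eq_bot_iff _ |>.mp h7 x (LinearMap.mem_ker.mpr h8)
  exact this


end PencilAux

theorem rmax_ge_two_thirds_of_true_entangled {N : ℕ} (hN : 1 ≤ N)
    (Γ₁ Γ₂ : Matrix (Fin N) (Fin N) ℂ) (h : TrueEntangled Γ₁ Γ₂)
    (hn : rmax Γ₁ Γ₂ < N) :
    2 * N ≤ 3 * rmax Γ₁ Γ₂ := by
  obtain ⟨hli, hrows, hcols⟩ := h
  have hne : {r : ℕ | ∃ α β : ℂ, ¬(α = 0 ∧ β = 0) ∧ (α • Γ₁ + β • Γ₂).rank = r}.Nonempty :=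
    ⟨Γ₁.rank, 1, 0, by simp, by simp⟩
  have hbdd : BddAbove {r : ℕ | ∃ α β : ℂ, ¬(α = 0 ∧ β = 0) ∧ (α • Γ₁ + β • Γ₂).rank = r} := by
    refine ⟨N, ?_⟩
    rintro r ⟨α, β, h0, rfl⟩
    exact (Matrix.rank_le_card_width _).trans (by simp)
  have hmem : rmax Γ₁ Γ₂ ∈ {r : ℕ | ∃ α β : ℂ, ¬(α = 0 ∧ β = 0) ∧ (α • Γ₁ + β • Γ₂).rank = r} :=
    Nat.sSup_mem hne hbdd
  obtain ⟨α, β, h0, hrank⟩ := hmem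
  have hub : ∀ r ∈ {r : ℕ | ∃ α β : ℂ, ¬(α = 0 ∧ β = 0) ∧ (α • Γ₁ + β • Γ₂).rank = r},
      r ≤ rmax Γ₁ Γ₂ := fun r hr => le_csSup hbdd hr
  have hrowinj := pencil_rows_inj Γ₁ Γ₂ hrows
  have hcolinj : ∀ x, Γ₁ᵀ *ᵥ x = 0 → Γ₂ᵀ *ᵥ x = 0 → x = 0 := by
    apply pencil_rows_inj
    rw [← Matrix.transpose_fromCols, Matrix.rank_transpose]
    exact hcols
  rcases not_and_or.mp h0 with hα | hβ
  · set A := α • Γ₁ + β • Γ₂ with hA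
    have hle : ∀ l : ℂ, (A + l • Γ₂).rank ≤ A.rank := by
      intro l
      have heq : A + l • Γ₂ = α • Γ₁ + (β + l) • Γ₂ := by
        rw [hA, add_smul]; abel
      rw [heq, hrank]
      exact hub _ ⟨α, β + l, fun hc => hα hc.1, rfl⟩
    have hker : ∀ x, A *ᵥ x = 0 → Γ₂ *ᵥ x = 0 → x = 0 := by
      intro x hAx h2
      have h1 : Γ₁ *ᵥ x = 0 := by
        have hcomb : α • (Γ₁ *ᵥ x) + β • (Γ₂ *ᵥ x) = 0 := by
          rw [← Matrix.smul_mulVec, ← Matrix.smul_mulVec, ← Matrix.add_mulVec]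
          exact hAx
        rw [h2, smul_zero, add_zero] at hcomb
        exact (smul_eq_zero.mp hcomb).resolve_left hα
      exact hrowinj x h1 h2
    have hkerT : ∀ x, Aᵀ *ᵥ x = 0 → Γ₂ᵀ *ᵥ x = 0 → x = 0 := by
      intro x hAx h2
      have hAT : Aᵀ = α • Γ₁ᵀ + β • Γ₂ᵀ := by
        rw [hA, Matrix.transpose_add, Matrix.transpose_smul, Matrix.transpose_smul]
      have h1 : Γ₁ᵀ *ᵥ x = 0 := by
        have hcomb : α • (Γ₁ᵀ *ᵥ x) + β • (Γ₂ᵀ *ᵥ x) = 0 := by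
          rw [← Matrix.smul_mulVec, ← Matrix.smul_mulVec, ← Matrix.add_mulVec, ← hAT]
          exact hAx
        rw [h2, smul_zero, add_zero] at hcomb
        exact (smul_eq_zero.mp hcomb).resolve_left hα
      exact hcolinj x h1 h2
    have hcore := pencil_core A Γ₂ hle hker hkerT
    rw [hrank] at hcore
    exact hcore
  · set A := α • Γ₁ + β • Γ₂ with hA
    have hle : ∀ l : ℂ, (A + l • Γ₁).rank ≤ A.rank := by
      intro l
      have heq : A + l • Γ₁ = (α + l) • Γ₁ + β • Γ₂ := by
        rw [hA, add_smul]; abel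
      rw [heq, hrank]
      exact hub _ ⟨α + l, β, fun hc => hβ hc.2, rfl⟩
    have hker : ∀ x, A *ᵥ x = 0 → Γ₁ *ᵥ x = 0 → x = 0 := by
      intro x hAx h1
      have h2 : Γ₂ *ᵥ x = 0 := by
        have hcomb : α • (Γ₁ *ᵥ x) + β • (Γ₂ *ᵥ x) = 0 := by
          rw [← Matrix.smul_mulVec, ← Matrix.smul_mulVec, ← Matrix.add_mulVec]
          exact hAx
        rw [h1, smul_zero, zero_add] at hcomb
        exact (smul_eq_zero.mp hcomb).resolve_left hβ
      exact hrowinj x h1 h2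
    have hkerT : ∀ x, Aᵀ *ᵥ x = 0 → Γ₁ᵀ *ᵥ x = 0 → x = 0 := by
      intro x hAx h1
      have hAT : Aᵀ = α • Γ₁ᵀ + β • Γ₂ᵀ := by
        rw [hA, Matrix.transpose_add, Matrix.transpose_smul, Matrix.transpose_smul]
      have h2 : Γ₂ᵀ *ᵥ x = 0 := by
        have hcomb : α • (Γ₁ᵀ *ᵥ x) + β • (Γ₂ᵀ *ᵥ x) = 0 := by
          rw [← Matrix.smul_mulVec, ← Matrix.smul_mulVec, ← Matrix.add_mulVec, ← hAT]
          exact hAx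
        rw [h1, smul_zero, zero_add] at hcomb
        exact (smul_eq_zero.mp hcomb).resolve_left hβ
      exact hcolinj x h1 h2
    have hcore := pencil_core A Γ₁ hle hker hkerT
    rw [hrank] at hcore
    exact hcore
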